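/- Let S ⊆ ℝ^d and let r, r', λ > 0 with m := ⌊r²/λ²⌋. Suppose S contains m vectors b₁, …, b_m, where each b_i decomposes as b_i = (b_i^{(1)}, b_i^{(2)}) ∈ ℝ^{d₁} × ℝ^{d₂} (with d₁ + d₂ = d), the vectors b₁^{(2)}, …, b_m^{(2)} are pairwise orthogonal, ‖b_i‖ = r' and ‖b_i^{(2)}‖ = r for all i. Then the set {b₁, …, b_m} is shattered by the partial concept class H_{r',λ}(S); in particular VC-dim(H_{r',λ}(S)) ≥ ⌊r²/λ²⌋. -/

import Mathlib

open scoped Classical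

noncomputable section

/-- A labeled sample `(x i, y i)` in a real normed space is `(r, λ)`-separable if all points
lie in a ball of radius `r` and the Euclidean distance between the convex hulls of the two
classes is at least `2·λ`. -/
def RLSep {E : Type} [NormedAddCommGroup E] [NormedSpace ℝ E] (r lam : ℝ)
    {ι : Type} (x : ι → E) (y : ι → Bool) : Prop :=
  (∃ p : E, ∀ i, dist (x i) p ≤ r) ∧
  ∀ u ∈ convexHull ℝ (x '' {i | y i = true}),
    ∀ v ∈ convexHull ℝ (x '' {i | y i = false}), 2 * lam ≤ dist u v

/-- The partial concept class `H_{r,λ}(S)`: partial concepts (`none` = undefined = `⋆`)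
supported on `S` all of whose finite labeled samples from the support are
`(r, λ)`-separable. -/
def HClass {E : Type} [NormedAddCommGroup E] [NormedSpace ℝ E] (r lam : ℝ) (S : Set E) :
    Set (E → Option Bool) :=
  {h | (∀ x : E, h x ≠ none → x ∈ S) ∧
    ∀ (m : ℕ) (x : Fin m → E) (y : Fin m → Bool),
      (∀ i, h (x i) = some (y i)) → RLSep r lam x y}

/-- A finite set `U` is shattered by a partial concept class `H` if every `{0,1}`-pattern on
`U` is realized by some concept in `H`. -/
def ShattersP {X : Type} (H : Set (X → Option Bool)) (U : Finset X) : Prop :=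
  ∀ τ : X → Bool, ∃ h ∈ H, ∀ x ∈ U, h x = some (τ x)

/-- Convex combinations over the image of an injective family can be indexed by the family. -/
lemma exists_weights {E : Type} [AddCommGroup E] [Module ℝ E] {n : ℕ} (b : Fin n → E)
    (hinj : Function.Injective b) (T : Finset (Fin n)) {u : E}
    (hu : u ∈ convexHull ℝ ↑(T.image b)) :
    ∃ w : Fin n → ℝ, (∀ i, 0 ≤ w i) ∧ (∀ i, i ∉ T → w i = 0) ∧ (∑ i, w i) = 1 ∧
      ∑ i, w i • b i = u := by
  rw [Finset.convexHull_eq] at hu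
  obtain ⟨w, hw0, hw1, hwc⟩ := hu
  have himg : ∀ {M : Type} [AddCommMonoid M] (f : E → M),
      ∑ y ∈ T.image b, f y = ∑ i ∈ T, f (b i) :=
    fun f => Finset.sum_image (fun i _ j _ h => hinj h)
  refine ⟨fun i => if i ∈ T then w (b i) else 0, ?_, ?_, ?_, ?_⟩
  · intro i
    dsimp only
    split
    · exact hw0 _ (Finset.mem_image_of_mem b ‹_›)
    · exact le_rfl
  · intro i hi; simp [hi]
  · rw [Finset.sum_ite_mem, Finset.univ_inter, ← himg, hw1]
  · rw [← hwc, Finset.centerMass_eq_of_sum_1 _ _ hw1]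
    simp only [ite_smul, zero_smul, Finset.sum_ite_mem, Finset.univ_inter, id]
    rw [himg (fun y => w y • y)]

/-- If `S ⊆ ℝ^{d₁} × ℝ^{d₂} = ℝ^d` contains `m := ⌊r²/λ²⌋` vectors
`b₁, …, b_m` whose second components are pairwise orthogonal, with `‖b_i‖ = r'` and
`‖b_i^{(2)}‖ = r`, then `{b₁, …, b_m}` is shattered by the partial concept class
`H_{r',λ}(S)`; in particular `VC-dim(H_{r',λ}(S)) ≥ ⌊r²/λ²⌋`. -/
theorem vc_lower_bound_of_orthogonal (d₁ d₂ : ℕ) (r r' lam : ℝ)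
    (hr : 0 < r) (hr' : 0 < r') (hlam : 0 < lam)
    (S : Set (EuclideanSpace ℝ (Fin d₁ ⊕ Fin d₂))) (m : ℕ) (hm : m = ⌊r ^ 2 / lam ^ 2⌋₊)
    (b : Fin m → EuclideanSpace ℝ (Fin d₁ ⊕ Fin d₂))
    (hbS : ∀ i, b i ∈ S)
    (horth : ∀ i j, i ≠ j → ∑ k, b i (Sum.inr k) * b j (Sum.inr k) = 0)
    (hnorm : ∀ i, ‖b i‖ = r')
    (hnorm2 : ∀ i, Real.sqrt (∑ k, (b i (Sum.inr k)) ^ 2) = r) :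
    ShattersP (HClass r' lam S) (Finset.univ.image b) ∧
      (Finset.univ.image b).card = m := by
  have hsum : ∀ i, ∑ k, (b i (Sum.inr k)) ^ 2 = r ^ 2 := fun i => by
    rw [← hnorm2 i, Real.sq_sqrt (Finset.sum_nonneg fun k _ => sq_nonneg _)]
  have hinj : Function.Injective b := by
    intro i j hij
    by_contra hne
    have h0 := horth i j hne
    rw [hij] at h0
    have h1 := hsum j
    simp only [sq] at h1
    nlinarith
  constructor
  · -- shattering
    intro τ
    refine ⟨fun x => if x ∈ Set.range b then some (τ x) else none, ⟨?_, ?_⟩, ?_⟩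
    · -- support
      intro x hx
      by_cases h : x ∈ Set.range b
      · obtain ⟨i, rfl⟩ := h; exact hbS i
      · simp [h] at hx
    · -- separability of samples
      intro n x y hxy
      have hx : ∀ i, x i ∈ Set.range b ∧ τ (x i) = y i := by
        intro i
        have h := hxy i
        by_cases hmem : x i ∈ Set.range b
        · simp only [hmem, if_pos, Option.some.injEq] at h
          exact ⟨hmem, h⟩
        · simp [hmem] at h
      constructor
      · exact ⟨0, fun i => by
          obtain ⟨⟨j, hj⟩, -⟩ := hx i
          rw [dist_zero_right, ← hj, hnorm]⟩
      · intro u hu v hv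
        set T : Finset (Fin m) := Finset.univ.filter (fun i => τ (b i) = true) with hT
        set F : Finset (Fin m) := Finset.univ.filter (fun i => τ (b i) = false) with hF
        have hsubT : x '' {i | y i = true} ⊆ ↑(T.image b) := by
          rintro _ ⟨i, hi, rfl⟩
          obtain ⟨⟨j, hj⟩, hτ⟩ := hx i
          have hjT : j ∈ T := by
            rw [hT, Finset.mem_filter]
            exact ⟨Finset.mem_univ _, by rw [hj, hτ]; exact hi⟩
          rw [← hj]
          exact Finset.mem_coe.mpr (Finset.mem_image_of_mem b hjT)
        have hsubF : x '' {i | y i = false} ⊆ ↑(F.image b) := by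
          rintro _ ⟨i, hi, rfl⟩
          obtain ⟨⟨j, hj⟩, hτ⟩ := hx i
          have hjF : j ∈ F := by
            rw [hF, Finset.mem_filter]
            exact ⟨Finset.mem_univ _, by rw [hj, hτ]; exact hi⟩
          rw [← hj]
          exact Finset.mem_coe.mpr (Finset.mem_image_of_mem b hjF)
        have hu' := convexHull_mono hsubT hu
        have hv' := convexHull_mono hsubF hv
        obtain ⟨α, hα0, hαT, hα1, hαu⟩ := exists_weights b hinj T (by convert hu')
        obtain ⟨β, hβ0, hβF, hβ1, hβv⟩ := exists_weights b hinj F (by convert hv')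
        have hdiszero : ∀ i, α i = 0 ∨ β i = 0 := by
          intro i
          by_cases hiT : i ∈ T
          · right
            apply hβF
            rw [hT, Finset.mem_filter] at hiT
            rw [hF, Finset.mem_filter]
            simp [hiT.2]
          · left; exact hαT i hiT
        set c : Fin m → ℝ := fun i => α i - β i with hcdef
        have habs : ∀ i, |c i| = α i + β i := by
          intro i
          simp only [hcdef]
          rcases hdiszero i with h | h
          · rw [h, zero_sub, abs_neg, abs_of_nonneg (hβ0 i), zero_add]
          · rw [h, sub_zero, abs_of_nonneg (hα0 i), add_zero]
        have hm0 : 0 < m := by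
          rcases Nat.eq_zero_or_pos m with h | h
          · exfalso; subst h; simp at hα1
          · exact h
        have hsum2 : ∑ i, |c i| = 2 := by
          simp only [habs]
          rw [Finset.sum_add_distrib, hα1, hβ1]; norm_num
        have hc2 : (0:ℝ) ≤ ∑ i, (c i) ^ 2 := Finset.sum_nonneg fun i _ => sq_nonneg _
        have hcs : (4:ℝ) ≤ (m : ℝ) * ∑ i, (c i) ^ 2 := by
          have hCS := sq_sum_le_card_mul_sum_sq (s := (Finset.univ : Finset (Fin m)))
            (f := fun i => |c i|)
          simp only [sq_abs, hsum2, Finset.card_univ, Fintype.card_fin] at hCS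
          norm_num at hCS
          exact hCS
        have huv : u - v = ∑ i, c i • b i := by
          rw [← hαu, ← hβv, ← Finset.sum_sub_distrib]
          simp only [hcdef, sub_smul]
        have happ : ∀ k, (u - v) (Sum.inr k) = ∑ i, c i * b i (Sum.inr k) := by
          intro k
          rw [huv]
          have h := map_sum (EuclideanSpace.proj (𝕜 := ℝ)
            (Sum.inr k : Fin d₁ ⊕ Fin d₂)) (fun i => c i • b i) Finset.univ
          simp only [map_smul, smul_eq_mul] at h
          exact h
        have hkey : ∑ k, ((u - v) (Sum.inr k)) ^ 2 = (∑ i, (c i) ^ 2) * r ^ 2 := by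
          simp only [happ]
          calc ∑ k, (∑ i, c i * b i (Sum.inr k)) ^ 2
              = ∑ k, ∑ i, ∑ j, (c i * b i (Sum.inr k)) * (c j * b j (Sum.inr k)) := by
                refine Finset.sum_congr rfl fun k _ => ?_
                rw [sq, Finset.sum_mul_sum]
            _ = ∑ i, ∑ j, ∑ k, (c i * b i (Sum.inr k)) * (c j * b j (Sum.inr k)) := by
                rw [Finset.sum_comm]
                exact Finset.sum_congr rfl fun i _ => Finset.sum_comm
            _ = ∑ i, ∑ j, (c i * c j) * ∑ k, b i (Sum.inr k) * b j (Sum.inr k) := by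
                refine Finset.sum_congr rfl fun i _ => Finset.sum_congr rfl fun j _ => ?_
                rw [Finset.mul_sum]
                exact Finset.sum_congr rfl fun k _ => by ring
            _ = ∑ i, (c i) ^ 2 * r ^ 2 := by
                refine Finset.sum_congr rfl fun i _ => ?_
                rw [Finset.sum_eq_single i]
                · have := hsum i
                  simp only [sq] at this ⊢
                  rw [this]
                · intro j _ hj
                  rw [horth i j (fun h => hj h.symm), mul_zero]
                · intro h; exact absurd (Finset.mem_univ i) h
            _ = (∑ i, (c i) ^ 2) * r ^ 2 := by rw [Finset.sum_mul]
        have hnsq : ‖u - v‖ ^ 2 = ∑ j, ((u - v) j) ^ 2 := by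
          rw [EuclideanSpace.norm_eq,
            Real.sq_sqrt (Finset.sum_nonneg fun j _ => sq_nonneg _)]
          exact Finset.sum_congr rfl fun j _ => by rw [Real.norm_eq_abs, sq_abs]
        have hsplit : ∑ j, ((u - v) j) ^ 2 =
            (∑ a : Fin d₁, ((u - v) (Sum.inl a)) ^ 2) +
              ∑ k : Fin d₂, ((u - v) (Sum.inr k)) ^ 2 := Fintype.sum_sum_type _
        have hmlam : (m : ℝ) * lam ^ 2 ≤ r ^ 2 := by
          have hfl : (m : ℝ) ≤ r ^ 2 / lam ^ 2 := by
            rw [hm]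
            exact Nat.floor_le (by positivity)
          calc (m : ℝ) * lam ^ 2 ≤ (r ^ 2 / lam ^ 2) * lam ^ 2 := by
                apply mul_le_mul_of_nonneg_right hfl (by positivity)
            _ = r ^ 2 := by field_simp
        have hlow : (2 * lam) ^ 2 ≤ ‖u - v‖ ^ 2 := by
          have h1 : (4:ℝ) * lam ^ 2 ≤ (∑ i, (c i) ^ 2) * r ^ 2 := by
            have h2 : ((m : ℝ) * ∑ i, (c i) ^ 2) * lam ^ 2 ≤ (∑ i, (c i) ^ 2) * r ^ 2 := by
              calc ((m : ℝ) * ∑ i, (c i) ^ 2) * lam ^ 2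
                  = (∑ i, (c i) ^ 2) * ((m : ℝ) * lam ^ 2) := by ring
                _ ≤ (∑ i, (c i) ^ 2) * r ^ 2 := mul_le_mul_of_nonneg_left hmlam hc2
            nlinarith [sq_nonneg lam]
          have h3 : ∑ k : Fin d₂, ((u - v) (Sum.inr k)) ^ 2 ≤ ‖u - v‖ ^ 2 := by
            rw [hnsq, hsplit]
            have : (0:ℝ) ≤ ∑ a : Fin d₁, ((u - v) (Sum.inl a)) ^ 2 :=
              Finset.sum_nonneg fun a _ => sq_nonneg _
            linarith
          calc (2 * lam) ^ 2 = 4 * lam ^ 2 := by ring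
            _ ≤ (∑ i, (c i) ^ 2) * r ^ 2 := h1
            _ = ∑ k, ((u - v) (Sum.inr k)) ^ 2 := hkey.symm
            _ ≤ ‖u - v‖ ^ 2 := h3
        rw [dist_eq_norm]
        nlinarith [norm_nonneg (u - v)]
    · -- realizes the pattern on the image
      intro z hz
      simp only [Finset.mem_image] at hz
      obtain ⟨i, -, rfl⟩ := hz
      simp [Set.mem_range_self]
  · rw [Finset.card_image_of_injective _ hinj, Finset.card_univ, Fintype.card_fin]

end
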